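/- Let ω ∈ ℝ, let 0 < τ₂ < τ, let f, f₂ : ℝ → ℝ, and let θ₀ ∈ ℝ. Suppose θ : ℝ → ℝ satisfies: (i) θ(0) = θ₀; (ii) θ has derivative ω at every t not of the form nτ or nτ + τ₂ (n ∈ ℕ); (iii) θ is continuous from the right at each time nτ and nτ + τ₂; (iv) for every n ≥ 1, if L is the left limit of θ at nτ then θ(nτ) = L + f(L); (v) for every n ∈ ℕ, if L₂ is the left limit of θ at nτ + τ₂ then θ(nτ + τ₂) = L₂ + f₂(L₂). Then for every n ∈ ℕ, θ(nτ) = G^[n](θ₀), where G = h₁ ∘ h₂ with h₂(s) = s + ωτ₂ + f₂(s + ωτ₂) and h₁(s) = s + ω(τ − τ₂) + f(s + ω(τ − τ₂)). -/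

import Mathlib

open Filter Topology


lemma affine_piece (θ : ℝ → ℝ) (ω a b : ℝ) (hab : a < b)
    (hc : ContinuousWithinAt θ (Set.Ici a) a)
    (hd : ∀ t ∈ Set.Ioo a b, HasDerivAt θ ω t) :
    Tendsto θ (𝓝[<] b) (𝓝 (θ a + ω * (b - a))) := by
  have key : ∀ t ∈ Set.Ioo a b, θ t = θ a + ω * (t - a) := by
    intro t ht
    have step : ∀ s ∈ Set.Ioo a t, θ t = θ s + ω * (t - s) := by
      intro s hs
      have hsub : Set.Icc s t ⊆ Set.Ioo a b :=
        fun x hx => ⟨lt_of_lt_of_le hs.1 hx.1, lt_of_le_of_lt hx.2 ht.2⟩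
      have hst : s ≤ t := le_of_lt hs.2
      have := eq_of_has_deriv_right_eq
        (f := θ) (g := fun u => θ s + ω * (u - s)) (f' := fun _ => ω) (a := s) (b := t)
        (fun x hx => (hd x (hsub ⟨hx.1, le_of_lt hx.2⟩)).hasDerivWithinAt)
        (fun x _ => by
          have : HasDerivAt (fun u => θ s + ω * (u - s)) ω x := by
            simpa using (((hasDerivAt_id x).sub_const s).const_mul ω).const_add (θ s)
          exact this.hasDerivWithinAt)
        (fun x hx => (hd x (hsub hx)).continuousAt.continuousWithinAt)
        (by fun_prop)
        (by simp)
      simpa using this t ⟨hst, le_refl t⟩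
    have h1 : Tendsto θ (𝓝[>] a) (𝓝 (θ a)) :=
      hc.tendsto.mono_left (nhdsWithin_mono a fun x hx => Set.mem_Ici.mpr (le_of_lt hx))
    have h2 : Tendsto (fun s => θ t - ω * (t - s)) (𝓝[>] a) (𝓝 (θ t - ω * (t - a))) := by
      apply Tendsto.mono_left _ nhdsWithin_le_nhds
      exact (Continuous.tendsto (by fun_prop) _)
    have heq : Tendsto θ (𝓝[>] a) (𝓝 (θ t - ω * (t - a))) := by
      apply h2.congr'
      filter_upwards [Ioo_mem_nhdsGT_of_mem ⟨le_refl a, ht.1⟩] with s hs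
      have := step s hs
      linarith
    have := tendsto_nhds_unique h1 heq
    linarith
  have h2 : Tendsto (fun t => θ a + ω * (t - a)) (𝓝[<] b) (𝓝 (θ a + ω * (b - a))) := by
    apply Tendsto.mono_left _ nhdsWithin_le_nhds
    exact (Continuous.tendsto (by fun_prop) _)
  apply h2.congr'
  filter_upwards [Ioo_mem_nhdsLT_of_mem ⟨hab, le_refl b⟩] with t htm
  exact (key t htm).symm


/-- A phase oscillator `dθ/dt = ω` receiving alternating instantaneous pulses
(shift by `f` at times `nτ`, shift by `f₂` at times `nτ + τ₂`) satisfies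
`θ(nτ) = G^[n](θ₀)` for the composite return map `G = h₁ ∘ h₂`. -/
theorem alternating_pulse_return_map
    (ω τ τ₂ : ℝ) (hτ₂ : 0 < τ₂) (hττ₂ : τ₂ < τ)
    (f f₂ : ℝ → ℝ) (θ₀ : ℝ) (θ : ℝ → ℝ)
    (hinit : θ 0 = θ₀)
    (hflow : ∀ t : ℝ,
      (¬ ∃ n : ℕ, t = (n : ℝ) * τ ∨ t = (n : ℝ) * τ + τ₂) →
      HasDerivAt θ ω t)
    (hright₁ : ∀ n : ℕ, ContinuousWithinAt θ (Set.Ici ((n : ℝ) * τ)) ((n : ℝ) * τ))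
    (hright₂ : ∀ n : ℕ,
      ContinuousWithinAt θ (Set.Ici ((n : ℝ) * τ + τ₂)) ((n : ℝ) * τ + τ₂))
    (hkick₁ : ∀ n : ℕ, 1 ≤ n → ∀ L : ℝ,
      Tendsto θ (𝓝[<] ((n : ℝ) * τ)) (𝓝 L) → θ ((n : ℝ) * τ) = L + f L)
    (hkick₂ : ∀ n : ℕ, ∀ L₂ : ℝ,
      Tendsto θ (𝓝[<] ((n : ℝ) * τ + τ₂)) (𝓝 L₂) →
      θ ((n : ℝ) * τ + τ₂) = L₂ + f₂ L₂)
    (h₁ h₂ : ℝ → ℝ)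
    (hh₂ : ∀ s, h₂ s = s + ω * τ₂ + f₂ (s + ω * τ₂))
    (hh₁ : ∀ s, h₁ s = s + ω * (τ - τ₂) + f (s + ω * (τ - τ₂))) :
    ∀ n : ℕ, θ ((n : ℝ) * τ) = (h₁ ∘ h₂)^[n] θ₀ := by

  have hτpos : 0 < τ := hτ₂.trans hττ₂
  intro n
  induction n with
  | zero => simpa using hinit
  | succ n ih =>
    set a : ℝ := (n : ℝ) * τ with ha
    have hd1 : ∀ t ∈ Set.Ioo a (a + τ₂), HasDerivAt θ ω t := by
      intro t ht
      apply hflow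
      rintro ⟨k, hk | hk⟩
      · have h1 : (n : ℝ) * τ < (k : ℝ) * τ := by rw [← hk]; exact ht.1
        have h2 : (n : ℝ) < k := lt_of_mul_lt_mul_right (by linarith) (le_of_lt hτpos)
        have h3 : n + 1 ≤ k := by exact_mod_cast h2
        have h4 : ((n : ℝ) + 1) ≤ k := by exact_mod_cast h3
        have := ht.2
        rw [hk] at this
        nlinarith
      · have h1 : (k : ℝ) * τ + τ₂ < (n : ℝ) * τ + τ₂ := by rw [← hk]; exact ht.2
        have h2 : (k : ℝ) < n := lt_of_mul_lt_mul_right (by linarith) (le_of_lt hτpos)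
        have h3 : k + 1 ≤ n := by exact_mod_cast h2
        have h4 : ((k : ℝ) + 1) ≤ n := by exact_mod_cast h3
        have := ht.1
        rw [hk] at this
        nlinarith
    have lim1 : Tendsto θ (𝓝[<] (a + τ₂)) (𝓝 (θ a + ω * τ₂)) := by
      have := affine_piece θ ω a (a + τ₂) (by linarith) (hright₁ n) hd1
      simpa using this
    have hm : θ (a + τ₂) = h₂ (θ a) := by
      rw [hh₂]
      exact hkick₂ n _ lim1
    have hab : a + τ₂ < ((n + 1 : ℕ) : ℝ) * τ := by push_cast; nlinarith
    have hd2 : ∀ t ∈ Set.Ioo (a + τ₂) (((n + 1 : ℕ) : ℝ) * τ), HasDerivAt θ ω t := by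
      intro t ht
      apply hflow
      rintro ⟨k, hk | hk⟩
      · have h1 : (n : ℝ) * τ < (k : ℝ) * τ := by
          rw [← hk]; have := ht.1; linarith
        have h2 : (n : ℝ) < k := lt_of_mul_lt_mul_right (by linarith) (le_of_lt hτpos)
        have h3 : n + 1 ≤ k := by exact_mod_cast h2
        have h4 : ((n : ℝ) + 1) ≤ k := by exact_mod_cast h3
        have := ht.2
        rw [hk] at this
        push_cast at this
        nlinarith
      · have h1 : (n : ℝ) * τ + τ₂ < (k : ℝ) * τ + τ₂ := by rw [← hk]; exact ht.1
        have h2 : (n : ℝ) < k := lt_of_mul_lt_mul_right (by linarith) (le_of_lt hτpos)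
        have h3 : n + 1 ≤ k := by exact_mod_cast h2
        have h4 : ((n : ℝ) + 1) ≤ k := by exact_mod_cast h3
        have := ht.2
        rw [hk] at this
        push_cast at this
        nlinarith
    have lim2 : Tendsto θ (𝓝[<] (((n + 1 : ℕ) : ℝ) * τ)) (𝓝 (θ (a + τ₂) + ω * (τ - τ₂))) := by
      have := affine_piece θ ω (a + τ₂) (((n + 1 : ℕ) : ℝ) * τ) hab (hright₂ n) hd2
      have harith : ((n + 1 : ℕ) : ℝ) * τ - (a + τ₂) = τ - τ₂ := by push_cast; ring
      rwa [harith] at this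
    have hb : θ (((n + 1 : ℕ) : ℝ) * τ) = h₁ (θ (a + τ₂)) := by
      rw [hh₁]
      exact hkick₁ (n + 1) (Nat.le_add_left 1 n) _ lim2
    rw [hb, hm, ih, Function.iterate_succ_apply']
    rfl
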